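/- arXiv:1205.4785 — 6 statements merged into one kernel-verified Lean document; each statement's English description precedes it below -/
import Mathlib

section
/- Let γ > 0, Φ1 ≥ Φ2 > 0, and 0 ≤ B' ≤ B. For i = 1, 2 define g_i(R) = (e^R − 1)/γ + Φ_i·(e^{B−R} − 1) and R_i° = (log(γ·Φ_i) + B)/2. Define g(R) = g_1(R) for R < B' and g(R) = g_2(R) for R ≥ B'. Then the infimum of g over the interval [0, B] equals min{ g_1(min(max(R_1°, 0), B')), g_2(min(max(R_2°, B'), B)) }. -/
private lemma key_exp (c R S Rs : ℝ) (hc : 0 < c)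
    (hsign : 0 ≤ (R - S) * (R + S - 2 * Rs)) :
    c * Real.exp S + (c * Real.exp (2 * Rs)) * Real.exp (-S) ≤
      c * Real.exp R + (c * Real.exp (2 * Rs)) * Real.exp (-R) := by
  have hdiff : c * Real.exp R + (c * Real.exp (2 * Rs)) * Real.exp (-R)
      - (c * Real.exp S + (c * Real.exp (2 * Rs)) * Real.exp (-S))
      = c * (Real.exp R - Real.exp S) * (1 - Real.exp (2 * Rs - R - S)) := by
    have h1 : Real.exp (2 * Rs) * Real.exp (-R) = Real.exp (2 * Rs - R) := by
      rw [← Real.exp_add]; ring_nf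
    have h2 : Real.exp (2 * Rs) * Real.exp (-S) = Real.exp (2 * Rs - S) := by
      rw [← Real.exp_add]; ring_nf
    have h3 : Real.exp R * Real.exp (2 * Rs - R - S) = Real.exp (2 * Rs - S) := by
      rw [← Real.exp_add]; ring_nf
    have h4 : Real.exp S * Real.exp (2 * Rs - R - S) = Real.exp (2 * Rs - R) := by
      rw [← Real.exp_add]; ring_nf
    nlinarith [h1, h2, h3, h4]
  have hkey : 0 ≤ c * (Real.exp R - Real.exp S) * (1 - Real.exp (2 * Rs - R - S)) := by
    rcases le_or_gt S R with h | h
    · -- R ≥ S, need R + S ≥ 2Rs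
      have hRS : 0 ≤ Real.exp R - Real.exp S := by
        have := Real.exp_le_exp.mpr h; linarith
      rcases eq_or_lt_of_le h with heq | hlt
      · rw [← heq]; simp
      · have hs : 0 ≤ R + S - 2 * Rs := by nlinarith
        have : Real.exp (2 * Rs - R - S) ≤ 1 := by
          rw [show (1:ℝ) = Real.exp 0 from (Real.exp_zero).symm]
          exact Real.exp_le_exp.mpr (by linarith)
        have := mul_nonneg hc.le hRS
        nlinarith
    · -- R < S, need R + S ≤ 2Rs
      have hRS : Real.exp R - Real.exp S ≤ 0 := by
        have := Real.exp_le_exp.mpr h.le; linarith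
      have hs : R + S - 2 * Rs ≤ 0 := by nlinarith
      have : 1 ≤ Real.exp (2 * Rs - R - S) := by
        rw [show (1:ℝ) = Real.exp 0 from (Real.exp_zero).symm]
        exact Real.exp_le_exp.mpr (by linarith)
      nlinarith [mul_nonneg hc.le (neg_nonneg.mpr hRS)]
  linarith [hdiff ▸ hkey]

private lemma clamp_min (γ Φ B : ℝ) (hγ : 0 < γ) (hΦ : 0 < Φ)
    (a b R : ℝ) (hab : a ≤ b) (hRa : a ≤ R) (hRb : R ≤ b) :
    (Real.exp (min (max ((Real.log (γ * Φ) + B) / 2) a) b) - 1) / γ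
        + Φ * (Real.exp (B - min (max ((Real.log (γ * Φ) + B) / 2) a) b) - 1)
      ≤ (Real.exp R - 1) / γ + Φ * (Real.exp (B - R) - 1) := by
  set Rs := (Real.log (γ * Φ) + B) / 2 with hRs
  set S := min (max Rs a) b with hS
  have hd : (1 / γ) * Real.exp (2 * Rs) = Φ * Real.exp B := by
    have : Real.exp (2 * Rs) = (γ * Φ) * Real.exp B := by
      rw [hRs, show 2 * ((Real.log (γ * Φ) + B) / 2) = Real.log (γ * Φ) + B by ring,
        Real.exp_add, Real.exp_log (by positivity)]
    rw [this]; field_simp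
  have hsign : 0 ≤ (R - S) * (R + S - 2 * Rs) := by
    rcases le_or_gt Rs a with h1 | h1
    · have hSa : S = a := by rw [hS, max_eq_right h1, min_eq_left hab]
      rw [hSa]; nlinarith
    · rcases le_or_gt b Rs with h2 | h2
      · have hSb : S = b := by rw [hS, max_eq_left h1.le, min_eq_right h2]
        rw [hSb]; nlinarith
      · have hSr : S = Rs := by rw [hS, max_eq_left h1.le, min_eq_left h2.le]
        rw [hSr]; nlinarith [sq_nonneg (R - Rs)]
  have := key_exp (1 / γ) R S Rs (by positivity) hsign
  rw [hd] at this
  have e1 : Real.exp (B - R) = Real.exp B * Real.exp (-R) := by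
    rw [← Real.exp_add]; ring_nf
  have e2 : Real.exp (B - S) = Real.exp B * Real.exp (-S) := by
    rw [← Real.exp_add]; ring_nf
  rw [e1, e2]
  have hγne : γ ≠ 0 := hγ.ne'
  field_simp at this ⊢
  nlinarith [this]

/-- Deterministic core of Corollary 1 (closed form for `K = 2` slots): the
infimum over `[0, B]` of the piecewise objective `g` (equal to `g₁` below the
threshold `B'` and to `g₂` from `B'` on) equals the minimum of the two candidate
values obtained by clamping the stationary points to their respective domains. -/
theorem stmt_6 (γ Φ1 Φ2 B B' : ℝ) (hγ : 0 < γ) (hΦ12 : Φ1 ≥ Φ2) (hΦ2 : 0 < Φ2)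
    (hB'0 : 0 ≤ B') (hB'B : B' ≤ B)
    (g1 g2 g : ℝ → ℝ)
    (hg1 : g1 = fun R : ℝ => (Real.exp R - 1) / γ + Φ1 * (Real.exp (B - R) - 1))
    (hg2 : g2 = fun R : ℝ => (Real.exp R - 1) / γ + Φ2 * (Real.exp (B - R) - 1))
    (hg : g = fun R : ℝ => if R < B' then g1 R else g2 R)
    (R1 R2 : ℝ)
    (hR1 : R1 = (Real.log (γ * Φ1) + B) / 2)
    (hR2 : R2 = (Real.log (γ * Φ2) + B) / 2) :
    sInf (g '' Set.Icc 0 B) =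
      min (g1 (min (max R1 0) B')) (g2 (min (max R2 B') B)) := by
  have hΦ1 : 0 < Φ1 := lt_of_lt_of_le hΦ2 hΦ12
  set c1 := min (max R1 0) B' with hc1
  set c2 := min (max R2 B') B with hc2
  set m := min (g1 c1) (g2 c2) with hm
  -- key lemmas specialized
  have key1 : ∀ R, 0 ≤ R → R ≤ B' → g1 c1 ≤ g1 R := by
    intro R h0 hB
    rw [hg1]
    simpa [hc1, hR1] using clamp_min γ Φ1 B hγ hΦ1 0 B' R hB'0 h0 hB
  have key2 : ∀ R, B' ≤ R → R ≤ B → g2 c2 ≤ g2 R := by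
    intro R h0 hB
    rw [hg2]
    simpa [hc2, hR2] using clamp_min γ Φ2 B hγ hΦ2 B' B R hB'B h0 hB
  -- bounds on c1, c2
  have hc1pos : 0 ≤ c1 := le_min (le_max_right _ _) hB'0
  have hc1le : c1 ≤ B' := min_le_right _ _
  have hc2ge : B' ≤ c2 := le_min (le_max_right _ _) hB'B
  have hc2le : c2 ≤ B := min_le_right _ _
  have hBnn : 0 ≤ B := le_trans hB'0 hB'B
  -- lower bound
  have hlb : ∀ x ∈ g '' Set.Icc 0 B, m ≤ x := by
    rintro x ⟨R, ⟨hR0, hRB⟩, rfl⟩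
    rw [hg]
    by_cases h : R < B'
    · simp only [if_pos h]
      exact le_trans (min_le_left _ _) (key1 R hR0 h.le)
    · simp only [if_neg h]
      exact le_trans (min_le_right _ _) (key2 R (not_lt.mp h) hRB)
  have hne : (g '' Set.Icc 0 B).Nonempty :=
    ⟨g 0, Set.mem_image_of_mem g ⟨le_refl 0, hBnn⟩⟩
  have hbdd : BddBelow (g '' Set.Icc 0 B) := ⟨m, hlb⟩
  -- membership of m
  have hmem : m ∈ g '' Set.Icc 0 B := by
    rcases le_or_gt (g2 c2) (g1 c1) with h | h
    · have hmm : m = g2 c2 := min_eq_right h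
      refine ⟨c2, ⟨le_trans hB'0 hc2ge, hc2le⟩, ?_⟩
      rw [hg]
      simp only [if_neg (not_lt.mpr hc2ge)]
      exact hmm.symm
    · have hmm : m = g1 c1 := min_eq_left h.le
      rcases lt_or_eq_of_le hc1le with hlt | heq
      · refine ⟨c1, ⟨hc1pos, le_trans hc1le hB'B⟩, ?_⟩
        rw [hg]
        simp only [if_pos hlt]
        exact hmm.symm
      · -- c1 = B': then g1 c1 = g1 B' ≥ g2 B' ≥ g2 c2, contradiction
        exfalso
        have h12 : g2 B' ≤ g1 B' := by
          rw [hg1, hg2]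
          have : (1:ℝ) ≤ Real.exp (B - B') := by
            rw [show (1:ℝ) = Real.exp 0 from (Real.exp_zero).symm]
            exact Real.exp_le_exp.mpr (by linarith)
          simp only
          nlinarith
        have := key2 B' le_rfl hB'B
        rw [heq] at h
        linarith
  exact le_antisymm (csInf_le hbdd hmem) (le_csInf hne hlb)
end

section
/- Let γ̄1, γ̄2 > 0 and ε > 0. Set k_i = e^{ε/γ̄_i}/γ̄_i, f_i(x) = k_i·e^{−x/γ̄_i} and F_i(x) = 1 − e^{(ε−x)/γ̄_i} for x ≥ ε, let ĥ = (1/γ̄1 + 1/γ̄2)^{−1} and k̂ = e^{ε/ĥ}/ĥ. Then ∫_ε^∞ (1/x)·( f_1(x)·F_2(x) + f_2(x)·F_1(x) ) dx = k_1·E1(ε/γ̄1) + k_2·E1(ε/γ̄2) − k̂·E1(ε/ĥ), where E1(z) = ∫_z^∞ e^{−t}/t dt. -/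
open MeasureTheory

/-- The exponential integral `E1(z) = ∫_z^∞ e^(−t)/t dt`. -/
noncomputable def E1 (z : ℝ) : ℝ := ∫ t in Set.Ioi z, Real.exp (-t) / t

lemma aux_int (γ ε : ℝ) (hγ : 0 < γ) (hε : 0 < ε) :
    IntegrableOn (fun x => Real.exp (-x/γ) / x) (Set.Ioi ε) := by
  have hmeas : AEStronglyMeasurable (fun x => Real.exp (-x/γ) / x)
      (volume.restrict (Set.Ioi ε)) := by
    apply ContinuousOn.aestronglyMeasurable ?_ measurableSet_Ioi
    apply ContinuousOn.div (Continuous.continuousOn (by continuity)) continuousOn_id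
    intro x hx; exact ne_of_gt (hε.trans hx)
  have hexp : IntegrableOn (fun x => Real.exp (-(1/γ) * x) / ε) (Set.Ioi ε) :=
    (exp_neg_integrableOn_Ioi ε (by positivity)).div_const ε
  refine Integrable.mono' hexp hmeas ?_
  filter_upwards [ae_restrict_mem measurableSet_Ioi] with x hx
  have hx0 : (0:ℝ) < x := hε.trans hx
  rw [Real.norm_eq_abs, abs_of_nonneg (by positivity)]
  have h1 : -x/γ = -(1/γ)*x := by ring
  rw [h1]
  gcongr
  exact le_of_lt hx

lemma aux_val (γ ε : ℝ) (hγ : 0 < γ) (hε : 0 < ε) :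
    ∫ x in Set.Ioi ε, Real.exp (-x/γ) / x = E1 (ε / γ) := by
  have h := integral_comp_mul_left_Ioi (fun t => Real.exp (-t) / t) ε (b := 1/γ) (by positivity)
  have h2 : ∀ x : ℝ, Real.exp (-(1/γ * x)) / (1/γ * x) = γ * (Real.exp (-x/γ) / x) := by
    intro x
    have e1 : -(1/γ*x) = -x/γ := by ring
    rw [e1]
    rcases eq_or_ne x 0 with rfl | hx
    · simp
    · field_simp
  rw [funext h2] at h
  rw [integral_const_mul] at h
  have e2 : 1/γ * ε = ε/γ := by ring
  rw [e2, smul_eq_mul, one_div, inv_inv] at h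
  have := mul_left_cancel₀ (ne_of_gt hγ) h
  rw [this]; rfl


/-- Equation (25) of the paper: `Φ2 = E[1/max(γ^sd, γ^rd)]` under independent
truncated exponential distributions, computed via the density
`f₁·F₂ + f₂·F₁` of the maximum. -/
theorem stmt_8 (γ1 γ2 ε : ℝ) (hγ1 : 0 < γ1) (hγ2 : 0 < γ2) (hε : 0 < ε)
    (k1 k2 : ℝ) (hk1 : k1 = Real.exp (ε / γ1) / γ1) (hk2 : k2 = Real.exp (ε / γ2) / γ2)
    (f1 f2 F1 F2 : ℝ → ℝ)
    (hf1 : f1 = fun x : ℝ => k1 * Real.exp (-x / γ1))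
    (hf2 : f2 = fun x : ℝ => k2 * Real.exp (-x / γ2))
    (hF1 : F1 = fun x : ℝ => 1 - Real.exp ((ε - x) / γ1))
    (hF2 : F2 = fun x : ℝ => 1 - Real.exp ((ε - x) / γ2))
    (hm khat : ℝ) (hhm : hm = (1 / γ1 + 1 / γ2)⁻¹) (hkhat : khat = Real.exp (ε / hm) / hm) :
    ∫ x in Set.Ioi ε, (1 / x) * (f1 x * F2 x + f2 x * F1 x) =
      k1 * E1 (ε / γ1) + k2 * E1 (ε / γ2) - khat * E1 (ε / hm) := by
  have hmpos : 0 < hm := by rw [hhm]; positivity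
  have hinvhm : 1 / hm = 1 / γ1 + 1 / γ2 := by rw [hhm, one_div, inv_inv]
  have key : ∀ x : ℝ,
      k1 * Real.exp (-x/γ1) * Real.exp ((ε-x)/γ2)
        + k2 * Real.exp (-x/γ2) * Real.exp ((ε-x)/γ1)
      = khat * Real.exp (-x/hm) := by
    intro x
    have c1 : ε/γ1 + -x/γ1 + (ε-x)/γ2 = (ε-x)*(1/γ1+1/γ2) := by field_simp; ring
    have c2 : ε/γ2 + -x/γ2 + (ε-x)/γ1 = (ε-x)*(1/γ1+1/γ2) := by field_simp; ring
    have c3 : ε/hm + -x/hm = (ε-x)*(1/γ1+1/γ2) := by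
      have : ε/hm + -x/hm = (ε - x) * (1/hm) := by ring
      rw [this, hinvhm]
    rw [hk1, hk2, hkhat]
    calc Real.exp (ε/γ1)/γ1 * Real.exp (-x/γ1) * Real.exp ((ε-x)/γ2)
          + Real.exp (ε/γ2)/γ2 * Real.exp (-x/γ2) * Real.exp ((ε-x)/γ1)
        = Real.exp (ε/γ1 + -x/γ1 + (ε-x)/γ2) * (1/γ1)
          + Real.exp (ε/γ2 + -x/γ2 + (ε-x)/γ1) * (1/γ2) := by
          rw [Real.exp_add, Real.exp_add, Real.exp_add, Real.exp_add]; ring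
      _ = Real.exp ((ε-x)*(1/γ1+1/γ2)) * (1/γ1 + 1/γ2) := by rw [c1, c2]; ring
      _ = Real.exp (ε/hm + -x/hm) * (1/hm) := by rw [c3, hinvhm]
      _ = Real.exp (ε/hm)/hm * Real.exp (-x/hm) := by rw [Real.exp_add]; ring
  have eq : (fun x : ℝ => (1/x) * (f1 x * F2 x + f2 x * F1 x))
      = fun x : ℝ => k1 * (Real.exp (-x/γ1)/x) + k2 * (Real.exp (-x/γ2)/x)
          - khat * (Real.exp (-x/hm)/x) := by
    funext x
    simp only [hf1, hf2, hF1, hF2]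
    have expand : (1/x) * (k1 * Real.exp (-x/γ1) * (1 - Real.exp ((ε-x)/γ2))
          + k2 * Real.exp (-x/γ2) * (1 - Real.exp ((ε-x)/γ1)))
        = k1 * (Real.exp (-x/γ1)/x) + k2 * (Real.exp (-x/γ2)/x)
          - (k1 * Real.exp (-x/γ1) * Real.exp ((ε-x)/γ2)
             + k2 * Real.exp (-x/γ2) * Real.exp ((ε-x)/γ1)) * (1/x) := by ring
    rw [expand, key x]; ring
  rw [eq]
  have I1 := (aux_int γ1 ε hγ1 hε).const_mul k1
  have I2 := (aux_int γ2 ε hγ2 hε).const_mul k2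
  have I3 := (aux_int hm ε hmpos hε).const_mul khat
  have I12 : Integrable (fun x : ℝ => k1 * (Real.exp (-x/γ1)/x) + k2 * (Real.exp (-x/γ2)/x))
      (volume.restrict (Set.Ioi ε)) := I1.add I2
  rw [integral_sub I12 I3, integral_add I1 I2, integral_const_mul,
    integral_const_mul, integral_const_mul, aux_val γ1 ε hγ1 hε, aux_val γ2 ε hγ2 hε,
    aux_val hm ε hmpos hε]
end

section
/- Let X and Y be independent real-valued random variables on a probability space, where X has law with density f_1(x) = (e^{ε/γ̄1}/γ̄1)·e^{−x/γ̄1}·1{x ≥ ε} and Y has law with density f_2(x) = (e^{ε/γ̄2}/γ̄2)·e^{−x/γ̄2}·1{x ≥ ε} with respect to Lebesgue measure, for some γ̄1, γ̄2 > 0 and ε > 0. Then E[1/max(X, Y)] = k_1·E1(ε/γ̄1) + k_2·E1(ε/γ̄2) − k̂·E1(ε/ĥ), where k_i = e^{ε/γ̄_i}/γ̄_i, ĥ = (1/γ̄1 + 1/γ̄2)^{−1}, k̂ = e^{ε/ĥ}/ĥ, and E1(z) = ∫_z^∞ e^{−t}/t dt. -/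
open MeasureTheory

open Set Real
open scoped ENNReal NNReal


lemma aux_E1 {a s : ℝ} (ha : 0 < a) :
    ∫ x in Set.Ioi s, Real.exp (-x / a) / x = E1 (s / a) := by
  have ha' : (0:ℝ) < a⁻¹ := inv_pos.mpr ha
  have h := integral_comp_mul_left_Ioi (fun t => Real.exp (-t) / t) s ha'
  simp only [smul_eq_mul, inv_inv] at h
  have key : ∀ x : ℝ, Real.exp (-(a⁻¹ * x)) / (a⁻¹ * x) = a * (Real.exp (-x / a) / x) := by
    intro x
    rcases eq_or_ne x 0 with rfl | hx
    · simp
    · rw [inv_mul_eq_div, div_div_eq_mul_div, neg_div]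
      ring
  simp only [key] at h
  rw [integral_const_mul] at h
  have : ∫ x in Set.Ioi s, Real.exp (-x / a) / x
      = ∫ x in Set.Ioi (a⁻¹ * s), Real.exp (-x) / x := by
    have := mul_left_cancel₀ (ne_of_gt ha) h
    exact this
  rw [this, E1, inv_mul_eq_div, div_eq_inv_mul]

lemma aux_exp_int {a : ℝ} (ha : 0 < a) {s t : ℝ} (hst : s ≤ t) :
    ∫ y in Set.Ioc s t, Real.exp (-y / a) = a * Real.exp (-s / a) - a * Real.exp (-t / a) := by
  rw [← intervalIntegral.integral_of_le hst]
  have hderiv : ∀ y ∈ Set.uIcc s t,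
      HasDerivAt (fun y => -a * Real.exp (-y / a)) (Real.exp (-y / a)) y := by
    intro y _
    have h1 : HasDerivAt (fun y : ℝ => -y / a) (-1 / a) y :=
      (hasDerivAt_id y).neg.div_const a
    have h2 := (h1.exp).const_mul (-a)
    convert h2 using 1
    · rfl
    · rfl
    rw [show -a * (Real.exp (-y / a) * (-1 / a)) = Real.exp (-y / a) * (a / a) by ring,
      div_self (ne_of_gt ha), mul_one]
  have hint : IntervalIntegrable (fun y => Real.exp (-y / a)) volume s t :=
    (Real.continuous_exp.comp (continuous_id.neg.div_const a)).intervalIntegrable s t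
  rw [intervalIntegral.integral_eq_sub_of_hasDerivAt hderiv hint]
  ring

lemma aux_integrableOn {a s : ℝ} (ha : 0 < a) (hs : 0 < s) :
    IntegrableOn (fun x => Real.exp (-x / a) / x) (Set.Ioi s) := by
  have hbase : IntegrableOn (fun x => Real.exp (-(a⁻¹) * x)) (Set.Ioi s) :=
    exp_neg_integrableOn_Ioi s (inv_pos.mpr ha)
  have hg : IntegrableOn (fun x => s⁻¹ * Real.exp (-(a⁻¹) * x)) (Set.Ioi s) :=
    hbase.const_mul _
  apply hg.integrable.mono
  · apply Measurable.aestronglyMeasurable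
    exact (Real.measurable_exp.comp ((measurable_id.neg).div_const a)).div measurable_id
  · rw [ae_restrict_iff' measurableSet_Ioi]
    filter_upwards with x hx
    have hx0 : 0 < x := lt_trans hs hx
    have h1 : -(a⁻¹) * x = -x / a := by field_simp
    rw [h1, Real.norm_eq_abs, Real.norm_eq_abs]
    rw [abs_of_nonneg (by positivity), abs_of_nonneg (by positivity)]
    rw [div_eq_mul_inv, mul_comm (s⁻¹)]
    apply mul_le_mul_of_nonneg_left _ (Real.exp_nonneg _)
    exact inv_anti₀ hs hx.le

lemma aux_integrableOn_exp {a s : ℝ} (ha : 0 < a) :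
    IntegrableOn (fun x => Real.exp (-x / a)) (Set.Ioi s) := by
  have hbase : IntegrableOn (fun x => Real.exp (-(a⁻¹) * x)) (Set.Ioi s) :=
    exp_neg_integrableOn_Ioi s (inv_pos.mpr ha)
  have : ∀ x : ℝ, -(a⁻¹) * x = -x / a := by intro x; field_simp
  simpa only [this] using hbase

noncomputable def dens (ε γ : ℝ) : ℝ → ℝ :=
  fun x => if ε ≤ x then Real.exp (ε / γ) / γ * Real.exp (-x / γ) else 0

lemma dens_nonneg (ε γ : ℝ) (hγ : 0 < γ) (x : ℝ) : 0 ≤ dens ε γ x := by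
  unfold dens; split
  · positivity
  · exact le_rfl

lemma dens_meas (ε γ : ℝ) : Measurable (dens ε γ) := by
  unfold dens
  exact Measurable.ite measurableSet_Ici
    ((measurable_const.mul (Real.measurable_exp.comp ((measurable_id.neg).div_const γ))))
    measurable_const

lemma withDensity_integral (ε γ : ℝ) (hγ : 0 < γ) (g : ℝ → ℝ) :
    ∫ x, g x ∂(volume.withDensity fun x => ENNReal.ofReal (dens ε γ x))
      = ∫ x, dens ε γ x * g x := by
  have heq : (fun x => ENNReal.ofReal (dens ε γ x))
      = fun x => ((dens ε γ x).toNNReal : ℝ≥0∞) := rfl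
  rw [heq, integral_withDensity_eq_integral_smul ((dens_meas ε γ).real_toNNReal)]
  congr 1; funext x
  rw [NNReal.smul_def, Real.coe_toNNReal _ (dens_nonneg ε γ hγ x), smul_eq_mul]

lemma ae_dens (ε γ : ℝ) :
    ∀ᵐ x ∂(volume.withDensity fun x => ENNReal.ofReal (dens ε γ x)), ε ≤ x := by
  rw [ae_withDensity_iff ((dens_meas ε γ).ennreal_ofReal)]
  filter_upwards with x hx
  by_contra h
  simp [dens, h] at hx

lemma exp_cancel (u : ℝ) : Real.exp u * Real.exp (-u) = 1 := by
  rw [← Real.exp_add]; simp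

lemma inner_le (ε γ : ℝ) (hγ : 0 < γ) {x : ℝ} (hx : ε ≤ x) (c : ℝ) :
    ∫ y, dens ε γ y * (if y ≤ x then c else 0)
      = c * (1 - Real.exp (ε / γ) * Real.exp (-x / γ)) := by
  have hpt : (fun y => dens ε γ y * (if y ≤ x then c else 0))
      = Set.indicator (Set.Icc ε x) (fun y => Real.exp (ε / γ) / γ * Real.exp (-y / γ) * c) := by
    funext y
    simp only [dens, Set.indicator_apply, Set.mem_Icc]
    by_cases h1 : ε ≤ y <;> by_cases h2 : y ≤ x <;> simp [h1, h2]
  rw [hpt, integral_indicator measurableSet_Icc, integral_Icc_eq_integral_Ioc,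
    integral_mul_const, integral_const_mul, aux_exp_int hγ hx]
  have hc := exp_cancel (ε / γ)
  have hγ' : γ ≠ 0 := ne_of_gt hγ
  have key : Real.exp (ε / γ) / γ * (γ * Real.exp (-ε / γ) - γ * Real.exp (-x / γ)) * c
      = c * (Real.exp (ε / γ) * Real.exp (-(ε / γ)) - Real.exp (ε / γ) * Real.exp (-x / γ)) := by
    rw [neg_div]; field_simp
  rw [key, hc]

lemma inner_lt (ε γ : ℝ) (hγ : 0 < γ) {y : ℝ} (hy : ε ≤ y) (c : ℝ) :
    ∫ x, dens ε γ x * (if y ≤ x then 0 else c)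
      = c * (1 - Real.exp (ε / γ) * Real.exp (-y / γ)) := by
  have hpt : (fun x => dens ε γ x * (if y ≤ x then 0 else c))
      = Set.indicator (Set.Ico ε y) (fun x => Real.exp (ε / γ) / γ * Real.exp (-x / γ) * c) := by
    funext x
    simp only [dens, Set.indicator_apply, Set.mem_Ico]
    rcases le_or_gt y x with h2 | h2
    · by_cases h1 : ε ≤ x <;> simp [h1, h2, not_lt.mpr h2]
    · by_cases h1 : ε ≤ x <;> simp [h1, h2, not_le.mpr h2]
  rw [hpt, integral_indicator measurableSet_Ico, integral_Ico_eq_integral_Ioo,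
    ← integral_Ioc_eq_integral_Ioo, integral_mul_const, integral_const_mul, aux_exp_int hγ hy]
  have hc := exp_cancel (ε / γ)
  have hγ' : γ ≠ 0 := ne_of_gt hγ
  have key : Real.exp (ε / γ) / γ * (γ * Real.exp (-ε / γ) - γ * Real.exp (-y / γ)) * c
      = c * (Real.exp (ε / γ) * Real.exp (-(ε / γ)) - Real.exp (ε / γ) * Real.exp (-y / γ)) := by
    rw [neg_div]; field_simp
  rw [key, hc]

lemma outer_calc (ε a b hmv : ℝ) (ha : 0 < a) (hm : 0 < hmv) (hε : 0 < ε)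
    (hprod : ∀ x : ℝ, Real.exp (-x / a) * Real.exp (-x / b) = Real.exp (-x / hmv)) :
    ∫ x, dens ε a x * (1 / x * (1 - Real.exp (ε / b) * Real.exp (-x / b)))
      = Real.exp (ε / a) / a * E1 (ε / a)
        - Real.exp (ε / a) / a * Real.exp (ε / b) * E1 (ε / hmv) := by
  have hpt : (fun x => dens ε a x * (1 / x * (1 - Real.exp (ε / b) * Real.exp (-x / b))))
      = Set.indicator (Set.Ici ε) (fun x =>
          Real.exp (ε / a) / a * (Real.exp (-x / a) / x)
            - Real.exp (ε / a) / a * Real.exp (ε / b) * (Real.exp (-x / hmv) / x)) := by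
    funext x
    simp only [dens, Set.indicator_apply, Set.mem_Ici]
    by_cases h1 : ε ≤ x
    · simp only [h1, if_true, ← hprod x]
      simp only [div_eq_mul_inv, one_mul, one_div]
      ring
    · simp [h1]
  rw [hpt, integral_indicator measurableSet_Ici, integral_Ici_eq_integral_Ioi]
  rw [integral_sub (((aux_integrableOn ha hε).const_mul _))
    (((aux_integrableOn hm hε).const_mul _)),
    integral_const_mul, integral_const_mul, aux_E1 ha, aux_E1 hm]

/-- Probabilistic content of equation (25): for independent truncated exponential
SNRs `X, Y` with mean parameters `γ1, γ2` and truncation threshold `ε`,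
`E[1/max(X,Y)] = k₁·E1(ε/γ1) + k₂·E1(ε/γ2) − k̂·E1(ε/ĥ)`. -/
theorem stmt_9 {Ω : Type*} [MeasurableSpace Ω] (P : Measure Ω) [IsProbabilityMeasure P]
    (X Y : Ω → ℝ) (hX : Measurable X) (hY : Measurable Y)
    (hXY : ProbabilityTheory.IndepFun X Y P)
    (γ1 γ2 ε : ℝ) (hγ1 : 0 < γ1) (hγ2 : 0 < γ2) (hε : 0 < ε)
    (hlawX : P.map X = volume.withDensity (fun x : ℝ =>
      ENNReal.ofReal (if ε ≤ x then Real.exp (ε / γ1) / γ1 * Real.exp (-x / γ1) else 0)))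
    (hlawY : P.map Y = volume.withDensity (fun x : ℝ =>
      ENNReal.ofReal (if ε ≤ x then Real.exp (ε / γ2) / γ2 * Real.exp (-x / γ2) else 0)))
    (k1 k2 hm khat : ℝ)
    (hk1 : k1 = Real.exp (ε / γ1) / γ1) (hk2 : k2 = Real.exp (ε / γ2) / γ2)
    (hhm : hm = (1 / γ1 + 1 / γ2)⁻¹) (hkhat : khat = Real.exp (ε / hm) / hm) :
    ∫ ω, 1 / max (X ω) (Y ω) ∂P =
      k1 * E1 (ε / γ1) + k2 * E1 (ε / γ2) - khat * E1 (ε / hm) := by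
  have hlawX' : P.map X = volume.withDensity fun x => ENNReal.ofReal (dens ε γ1 x) := hlawX
  have hlawY' : P.map Y = volume.withDensity fun x => ENNReal.ofReal (dens ε γ2 x) := hlawY
  haveI hPM1 : IsProbabilityMeasure (P.map X) := Measure.isProbabilityMeasure_map hX.aemeasurable
  haveI hPM2 : IsProbabilityMeasure (P.map Y) := Measure.isProbabilityMeasure_map hY.aemeasurable
  have hmpos : 0 < hm := by
    rw [hhm]; positivity
  have hprodexp : ∀ x : ℝ, Real.exp (-x / γ1) * Real.exp (-x / γ2) = Real.exp (-x / hm) := by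
    intro x
    rw [← Real.exp_add]
    congr 1
    rw [hhm]
    field_simp
    ring
  have hmap : P.map (fun ω => (X ω, Y ω)) = (P.map X).prod (P.map Y) :=
    (ProbabilityTheory.indepFun_iff_map_prod_eq_prod_map_map hX.aemeasurable
      hY.aemeasurable).mp hXY
  have hgmeas : Measurable (fun p : ℝ × ℝ => 1 / max p.1 p.2) :=
    measurable_const.div (measurable_fst.max measurable_snd)
  have step1 : ∫ ω, 1 / max (X ω) (Y ω) ∂P
      = ∫ p : ℝ × ℝ, 1 / max p.1 p.2 ∂((P.map X).prod (P.map Y)) := by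
    rw [← hmap, integral_map (hX.prodMk hY).aemeasurable hgmeas.aestronglyMeasurable]
  have hae1 : ∀ᵐ x ∂(P.map X), ε ≤ x := by rw [hlawX']; exact ae_dens ε γ1
  have hae2 : ∀ᵐ y ∂(P.map Y), ε ≤ y := by rw [hlawY']; exact ae_dens ε γ2
  have hcompl : (Set.Ici ε)ᶜ = {x : ℝ | ¬ ε ≤ x} := by ext x; simp
  have hs1 : (P.map X) (Set.Ici ε)ᶜ = 0 := by
    have h := hae1
    rw [ae_iff] at h
    rw [hcompl]; exact h
  have hs2 : (P.map Y) (Set.Ici ε)ᶜ = 0 := by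
    have h := hae2
    rw [ae_iff] at h
    rw [hcompl]; exact h
  have haeP : ∀ᵐ p ∂((P.map X).prod (P.map Y)), ε ≤ p.1 ∧ ε ≤ p.2 := by
    have key : ((P.map X).prod (P.map Y)) ((Set.Ici ε ×ˢ Set.Ici ε)ᶜ) = 0 := by
      rw [Set.compl_prod_eq_union]
      apply measure_union_null
      · rw [Measure.prod_prod, hs1, zero_mul]
      · rw [Measure.prod_prod, hs2, mul_zero]
    rw [ae_iff]
    have hset : {p : ℝ × ℝ | ¬(ε ≤ p.1 ∧ ε ≤ p.2)} = (Set.Ici ε ×ˢ Set.Ici ε)ᶜ := by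
      ext p
      simp only [Set.mem_setOf_eq, Set.mem_compl_iff, Set.mem_prod, Set.mem_Ici]
    rw [hset]
    exact key
  have hIa : Integrable (fun p : ℝ × ℝ => if p.2 ≤ p.1 then 1 / p.1 else 0)
      ((P.map X).prod (P.map Y)) := by
    constructor
    · exact (Measurable.ite (measurableSet_le measurable_snd measurable_fst)
        (measurable_const.div measurable_fst) measurable_const).aestronglyMeasurable
    · apply HasFiniteIntegral.of_bounded (C := 1 / ε)
      filter_upwards [haeP] with p hp
      rcases hp with ⟨hp1, hp2⟩
      have h0 : 0 < p.1 := lt_of_lt_of_le hε hp1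
      split
      · rw [Real.norm_eq_abs, abs_of_nonneg (one_div_nonneg.mpr h0.le)]
        exact one_div_le_one_div_of_le hε hp1
      · rw [norm_zero]; exact (one_div_pos.mpr hε).le
  have hIb : Integrable (fun p : ℝ × ℝ => if p.2 ≤ p.1 then 0 else 1 / p.2)
      ((P.map X).prod (P.map Y)) := by
    constructor
    · exact (Measurable.ite (measurableSet_le measurable_snd measurable_fst)
        measurable_const (measurable_const.div measurable_snd)).aestronglyMeasurable
    · apply HasFiniteIntegral.of_bounded (C := 1 / ε)
      filter_upwards [haeP] with p hp
      rcases hp with ⟨hp1, hp2⟩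
      have h0 : 0 < p.2 := lt_of_lt_of_le hε hp2
      split
      · rw [norm_zero]; exact (one_div_pos.mpr hε).le
      · rw [Real.norm_eq_abs, abs_of_nonneg (one_div_nonneg.mpr h0.le)]
        exact one_div_le_one_div_of_le hε hp2
  have hsplit : (fun p : ℝ × ℝ => 1 / max p.1 p.2)
      = fun p : ℝ × ℝ => (if p.2 ≤ p.1 then 1 / p.1 else 0)
        + (if p.2 ≤ p.1 then 0 else 1 / p.2) := by
    funext p
    by_cases h : p.2 ≤ p.1
    · simp [h, max_eq_left h]
    · simp [h, max_eq_right (le_of_not_ge h)]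
  have hJ1 : ∫ p : ℝ × ℝ, (if p.2 ≤ p.1 then 1 / p.1 else 0) ∂((P.map X).prod (P.map Y))
      = Real.exp (ε / γ1) / γ1 * E1 (ε / γ1)
        - Real.exp (ε / γ1) / γ1 * Real.exp (ε / γ2) * E1 (ε / hm) := by
    rw [integral_prod _ hIa]
    have hin : ∀ᵐ x ∂(P.map X),
        (∫ y, (if y ≤ x then 1 / x else 0) ∂(P.map Y))
          = 1 / x * (1 - Real.exp (ε / γ2) * Real.exp (-x / γ2)) := by
      filter_upwards [hae1] with x hx
      rw [hlawY', withDensity_integral ε γ2 hγ2]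
      exact inner_le ε γ2 hγ2 hx (1 / x)
    rw [integral_congr_ae hin, hlawX', withDensity_integral ε γ1 hγ1]
    exact outer_calc ε γ1 γ2 hm hγ1 hmpos hε hprodexp
  have hJ2 : ∫ p : ℝ × ℝ, (if p.2 ≤ p.1 then 0 else 1 / p.2) ∂((P.map X).prod (P.map Y))
      = Real.exp (ε / γ2) / γ2 * E1 (ε / γ2)
        - Real.exp (ε / γ2) / γ2 * Real.exp (ε / γ1) * E1 (ε / hm) := by
    rw [integral_prod_symm _ hIb]
    have hin : ∀ᵐ y ∂(P.map Y),
        (∫ x, (if y ≤ x then 0 else 1 / y) ∂(P.map X))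
          = 1 / y * (1 - Real.exp (ε / γ1) * Real.exp (-y / γ1)) := by
      filter_upwards [hae2] with y hy
      rw [hlawX', withDensity_integral ε γ1 hγ1]
      exact inner_lt ε γ1 hγ1 hy (1 / y)
    rw [integral_congr_ae hin, hlawY', withDensity_integral ε γ2 hγ2]
    exact outer_calc ε γ2 γ1 hm hγ2 hmpos hε (fun x => by rw [← hprodexp x]; ring)
  have hkh : khat = Real.exp (ε / γ1) / γ1 * Real.exp (ε / γ2)
      + Real.exp (ε / γ2) / γ2 * Real.exp (ε / γ1) := by
    have hsum : ε / hm = ε / γ1 + ε / γ2 := by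
      rw [hhm]; field_simp
    rw [hkhat, hsum, Real.exp_add, hhm]
    field_simp
  rw [step1, hsplit, integral_add hIa hIb, hJ1, hJ2, hk1, hk2, hkh]
  ring
end

section
/- Let x > 0 and define ξ1(x, ε) = e^{ε/x}·E1(ε/x)/x for ε > 0, where E1(z) = ∫_z^∞ e^{−t}/t dt. Then, as ε → 0 from the right, ξ1(x, ε) + (1/x)·(γ' + log(ε/x)) = O(ε·log ε); that is, the function ε ↦ ξ1(x, ε) + (1/x)·(γ' + log(ε/x)) is big-O of ε ↦ ε·log ε along the filter of right-neighborhoods of 0, where γ' is the Euler–Mascheroni constant. -/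
open MeasureTheory Filter Topology Asymptotics

/-- `ξ1(x, ε) = e^(ε/x)·E1(ε/x)/x`, the expected inverse SNR under the truncated
exponential distribution with mean parameter `x` and truncation threshold `ε`. -/
noncomputable def ξ1 (x ε : ℝ) : ℝ := Real.exp (ε / x) * E1 (ε / x) / x

private lemma integrableOn_E1 {z : ℝ} (hz : 0 < z) :
    IntegrableOn (fun t => Real.exp (-t) / t) (Set.Ioi z) := by
  have h1 : IntegrableOn (fun t : ℝ => Real.exp (-1 * t) / z) (Set.Ioi z) :=
    (exp_neg_integrableOn_Ioi z one_pos).div_const z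
  refine Integrable.mono' h1 ?_ ?_
  · exact (ContinuousOn.div (Real.continuous_exp.comp continuous_neg).continuousOn
      continuousOn_id (fun t ht => (hz.trans ht).ne')).aestronglyMeasurable measurableSet_Ioi
  · filter_upwards [ae_restrict_mem measurableSet_Ioi] with t ht
    have ht0 : 0 < t := hz.trans ht
    rw [Real.norm_eq_abs, abs_of_nonneg (by positivity), neg_one_mul]
    gcongr
    exact le_of_lt ht

private lemma E1_split {a b : ℝ} (ha : 0 < a) (hab : a ≤ b) :
    E1 a = (∫ t in a..b, Real.exp (-t) / t) + E1 b := by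
  rw [E1, E1, intervalIntegral.integral_of_le hab,
    ← setIntegral_union (Set.Ioc_disjoint_Ioi le_rfl) measurableSet_Ioi
      ((integrableOn_E1 ha).mono_set Set.Ioc_subset_Ioi_self)
      (integrableOn_E1 (ha.trans_le hab)),
    Set.Ioc_union_Ioi_eq_Ioi hab]

private lemma abs_exp_sub {t : ℝ} (ht : 0 ≤ t) : |Real.exp (-t) - 1| ≤ t := by
  rw [abs_sub_comm, abs_of_nonneg (by simp [Real.exp_le_one_iff, neg_nonpos.mpr ht])]
  nlinarith [Real.add_one_le_exp (-t)]

private lemma abs_g_le {t : ℝ} (ht : 0 ≤ t) : |(Real.exp (-t) - 1) / t| ≤ 1 := by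
  rcases eq_or_lt_of_le ht with rfl | ht
  · simp
  · rw [abs_div, abs_of_pos ht, div_le_one ht]
    exact abs_exp_sub ht.le

private lemma g_intervalIntegrable {a b : ℝ} (ha : 0 ≤ a) (hab : a ≤ b) :
    IntervalIntegrable (fun t => (Real.exp (-t) - 1) / t) volume a b := by
  rw [intervalIntegrable_iff_integrableOn_Ioc_of_le hab]
  refine Integrable.mono' (integrable_const 1) ?_ ?_
  · exact (((Real.measurable_exp.comp measurable_neg).sub measurable_const).div
      measurable_id).aestronglyMeasurable
  · filter_upwards [ae_restrict_mem measurableSet_Ioc] with t htm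
    rw [Real.norm_eq_abs]; exact abs_g_le (le_of_lt (lt_of_le_of_lt ha htm.1))

private lemma integral_log_exp_eq_neg_gamma :
    ∫ t in Set.Ioi (0:ℝ), Real.log t * Real.exp (-t) = -Real.eulerMascheroniConstant := by
  set I : ℝ := ∫ t in Set.Ioi (0:ℝ), Real.log t * Real.exp (-t) with hI
  have hC : HasDerivAt Complex.GammaIntegral
      (∫ t : ℝ in Set.Ioi 0, (t:ℂ) ^ ((1:ℂ) - 1) * (Real.log t * Real.exp (-t))) 1 :=
    Complex.hasDerivAt_GammaIntegral (by norm_num)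
  have hval : (∫ t : ℝ in Set.Ioi 0, (t:ℂ) ^ ((1:ℂ) - 1) * (Real.log t * Real.exp (-t)))
      = (I : ℂ) := by
    rw [hI]
    rw [show ((∫ t in Set.Ioi (0:ℝ), Real.log t * Real.exp (-t) : ℝ) : ℂ)
      = ∫ t in Set.Ioi (0:ℝ), ((Real.log t * Real.exp (-t) : ℝ) : ℂ) from
      (integral_ofReal).symm]
    refine setIntegral_congr_fun measurableSet_Ioi (fun t ht => ?_)
    simp [Complex.cpow_zero]
  rw [hval] at hC
  have hGamma : HasDerivAt Complex.Gamma (I : ℂ) 1 := by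
    refine hC.congr_of_eventuallyEq ?_
    have hopen : IsOpen {s : ℂ | 0 < s.re} := isOpen_lt continuous_const Complex.continuous_re
    filter_upwards [hopen.mem_nhds (by norm_num : (0:ℝ) < (1:ℂ).re)] with s hs
    exact Complex.Gamma_eq_integral hs
  have hreal : HasDerivAt Real.Gamma I 1 := by
    have h2 : HasDerivAt (fun x : ℝ => (Complex.Gamma x).re) (I : ℂ).re 1 := by
      exact HasDerivAt.real_of_complex (by exact_mod_cast hGamma)
    simpa [Complex.Gamma_ofReal] using h2
  have := hreal.unique Real.hasDerivAt_Gamma_one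
  linarith [this]

private lemma intOn_log_exp_Ioc :
    IntegrableOn (fun t => Real.log t * Real.exp (-t)) (Set.Ioc (0:ℝ) 1) := by
  have hb : IntegrableOn (fun t : ℝ => 2 * t ^ (-(1/2) : ℝ)) (Set.Ioc (0:ℝ) 1) := by
    have := (intervalIntegrable_iff_integrableOn_Ioc_of_le (zero_le_one)).mp
      (intervalIntegral.intervalIntegrable_rpow' (by norm_num : (-1:ℝ) < -(1/2)))
    exact this.const_mul 2
  refine Integrable.mono' hb ?_ ?_
  · exact ((Real.measurable_log.mul
      (Real.measurable_exp.comp measurable_neg))).aestronglyMeasurable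
  · filter_upwards [ae_restrict_mem measurableSet_Ioc] with t ht
    have ht0 : 0 < t := ht.1
    have ht1 : t ≤ 1 := ht.2
    have hlogle : -Real.log t ≤ 2 * t ^ (-(1/2) : ℝ) := by
      have h1 : Real.log (t ^ (-(1/2) : ℝ)) ≤ t ^ (-(1/2) : ℝ) - 1 :=
        Real.log_le_sub_one_of_pos (Real.rpow_pos_of_pos ht0 _)
      rw [Real.log_rpow ht0] at h1
      have h2 : (0:ℝ) ≤ t ^ (-(1/2) : ℝ) := (Real.rpow_pos_of_pos ht0 _).le
      linarith
    have hlognp : Real.log t ≤ 0 := Real.log_nonpos ht0.le ht1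
    rw [Real.norm_eq_abs, abs_mul, abs_of_nonpos hlognp,
      abs_of_pos (Real.exp_pos _)]
    have hexp : Real.exp (-t) ≤ 1 := Real.exp_le_one_iff.mpr (by linarith)
    nlinarith [Real.exp_pos (-t)]

private lemma intOn_log_exp_Ioi :
    IntegrableOn (fun t => Real.log t * Real.exp (-t)) (Set.Ioi (1:ℝ)) := by
  have hb : IntegrableOn (fun t : ℝ => Real.exp (-t) * t ^ ((2:ℝ) - 1)) (Set.Ioi (1:ℝ)) :=
    (Real.GammaIntegral_convergent (by norm_num : (0:ℝ) < 2)).mono_set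
      (Set.Ioi_subset_Ioi zero_le_one)
  refine Integrable.mono' hb ?_ ?_
  · exact ((Real.measurable_log.mul
      (Real.measurable_exp.comp measurable_neg))).aestronglyMeasurable
  · filter_upwards [ae_restrict_mem measurableSet_Ioi] with t ht
    have ht1 : (1:ℝ) < t := ht
    have h0 : (0:ℝ) < t := zero_lt_one.trans ht1
    have hl : |Real.log t| ≤ t := by
      rw [abs_of_nonneg (Real.log_nonneg ht1.le)]
      linarith [Real.log_le_sub_one_of_pos h0]
    rw [Real.norm_eq_abs, abs_mul, abs_of_pos (Real.exp_pos _)]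
    calc |Real.log t| * Real.exp (-t) ≤ t * Real.exp (-t) := by
          exact mul_le_mul_of_nonneg_right hl (Real.exp_pos _).le
      _ = Real.exp (-t) * t ^ ((2:ℝ) - 1) := by
          rw [show ((2:ℝ) - 1) = 1 by norm_num, Real.rpow_one]; ring

private lemma hasDerivAt_exp_neg (t : ℝ) :
    HasDerivAt (fun s : ℝ => Real.exp (-s)) (-Real.exp (-t)) t := by
  exact ((hasDerivAt_neg t).exp).congr_deriv (by ring)

private lemma ibp_Ioi : ∫ t in Set.Ioi (1:ℝ), Real.log t * Real.exp (-t) = E1 1 := by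
  have key : ∫ t in Set.Ioi (1:ℝ),
      (Real.log t * Real.exp (-t) - Real.exp (-t) / t) = 0 - (-Real.exp (-1) * Real.log 1) := by
    apply integral_Ioi_of_hasDerivAt_of_tendsto
      (f := fun t => -Real.exp (-t) * Real.log t)
    · exact (((hasDerivAt_exp_neg 1).neg.mul
        (Real.hasDerivAt_log one_ne_zero)).continuousAt).continuousWithinAt
    · intro t ht
      have ht0 : (0:ℝ) < t := zero_lt_one.trans ht
      have h := ((hasDerivAt_exp_neg t).neg.mul (Real.hasDerivAt_log ht0.ne'))
      refine h.congr_deriv ?_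
      simp only [Pi.neg_apply, Pi.sub_apply, Pi.mul_apply, neg_neg]
      ring
    · exact (intOn_log_exp_Ioi).sub (integrableOn_E1 zero_lt_one)
    · refine squeeze_zero_norm' (a := fun t : ℝ => t * Real.exp (-t)) ?_ ?_
      · filter_upwards [eventually_ge_atTop (1:ℝ)] with t ht
        have h0 : (0:ℝ) < t := lt_of_lt_of_le zero_lt_one ht
        have hl : |Real.log t| ≤ t := by
          rw [abs_of_nonneg (Real.log_nonneg ht)]
          linarith [Real.log_le_sub_one_of_pos h0]
        rw [Real.norm_eq_abs, abs_mul, abs_neg, abs_of_pos (Real.exp_pos _)]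
        calc Real.exp (-t) * |Real.log t| ≤ Real.exp (-t) * t :=
              mul_le_mul_of_nonneg_left hl (Real.exp_pos _).le
          _ = t * Real.exp (-t) := mul_comm _ _
      · simpa using Real.tendsto_pow_mul_exp_neg_atTop_nhds_zero 1
  have hsub := key
  rw [Real.log_one, mul_zero, sub_zero] at hsub
  have := integral_sub intOn_log_exp_Ioi (integrableOn_E1 zero_lt_one)
  rw [hsub] at this
  rw [E1]
  linarith [this]

private lemma ibp_Ioc :
    (∫ t in Set.Ioc (0:ℝ) 1, Real.log t * Real.exp (-t))
      = ∫ t in (0:ℝ)..1, (Real.exp (-t) - 1) / t := by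
  set v : ℝ → ℝ := fun t => (1 - Real.exp (-t)) * Real.log t with hv
  have hderiv : ∀ t ∈ Set.Ioo (0:ℝ) 1, HasDerivAt v
      (Real.log t * Real.exp (-t) - (Real.exp (-t) - 1) / t) t := by
    intro t ht
    have h := ((hasDerivAt_exp_neg t).const_sub 1).mul (Real.hasDerivAt_log ht.1.ne')
    refine h.congr_deriv ?_
    simp only [Pi.neg_apply, Pi.sub_apply, Pi.mul_apply, neg_neg]
    ring
  have hcont : ContinuousOn v (Set.Icc (0:ℝ) 1) := by
    intro t ht
    rcases eq_or_lt_of_le ht.1 with rfl | ht0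
    · have hv0 : v 0 = 0 := by simp [hv]
      unfold ContinuousWithinAt
      rw [hv0]
      refine squeeze_zero_norm' (a := fun t : ℝ => |Real.log t * t|) ?_ ?_
      · filter_upwards [self_mem_nhdsWithin] with s hs
        have hs0 : (0:ℝ) ≤ s := hs.1
        rw [hv]
        simp only [Real.norm_eq_abs, abs_mul]
        have h1 : |1 - Real.exp (-s)| ≤ s := by rw [abs_sub_comm]; exact abs_exp_sub hs0
        calc |1 - Real.exp (-s)| * |Real.log s| ≤ s * |Real.log s| :=
              mul_le_mul_of_nonneg_right h1 (abs_nonneg _)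
          _ = |Real.log s| * |s| := by rw [abs_of_nonneg hs0]; ring
      · have hsub : Set.Icc (0:ℝ) 1 ⊆ insert 0 (Set.Ioi 0) := by
          intro s hs
          rcases eq_or_lt_of_le hs.1 with rfl | h
          · exact Set.mem_insert _ _
          · exact Set.mem_insert_of_mem _ h
        refine Filter.Tendsto.mono_left ?_ (nhdsWithin_mono 0 hsub)
        rw [nhdsWithin_insert, Filter.tendsto_sup]
        constructor
        · simpa using tendsto_pure_nhds (fun t : ℝ => |Real.log t * t|) 0
        · have := (tendsto_log_mul_rpow_nhdsGT_zero one_pos).abs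
          simp only [abs_zero] at this
          refine this.congr' ?_
          filter_upwards [self_mem_nhdsWithin] with s _
          rw [Real.rpow_one]
    · exact ((continuousAt_const.sub
        ((Real.continuous_exp.comp continuous_neg).continuousAt)).mul
        (Real.continuousAt_log ht0.ne')).continuousWithinAt
  have hint : IntervalIntegrable
      (fun t => Real.log t * Real.exp (-t) - (Real.exp (-t) - 1) / t) volume 0 1 := by
    refine IntervalIntegrable.sub ?_ (g_intervalIntegrable le_rfl zero_le_one)
    rw [intervalIntegrable_iff_integrableOn_Ioc_of_le zero_le_one]
    exact intOn_log_exp_Ioc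
  have key := intervalIntegral.integral_eq_sub_of_hasDeriv_right_of_le zero_le_one hcont
    (fun t ht => (hderiv t ht).hasDerivWithinAt) hint
  have hv1 : v 1 = 0 := by simp [hv]
  have hv0 : v 0 = 0 := by simp [hv]
  rw [hv1, hv0, sub_zero] at key
  have hsplit := intervalIntegral.integral_sub
    ((intervalIntegrable_iff_integrableOn_Ioc_of_le zero_le_one).mpr intOn_log_exp_Ioc)
    (g_intervalIntegrable le_rfl zero_le_one)
  rw [key] at hsplit
  have h0 : (∫ t in (0:ℝ)..1, Real.log t * Real.exp (-t))
      = ∫ t in Set.Ioc (0:ℝ) 1, Real.log t * Real.exp (-t) :=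
    intervalIntegral.integral_of_le zero_le_one
  rw [h0] at hsplit
  linarith [hsplit]

private lemma key_gamma :
    E1 1 + (∫ t in (0:ℝ)..1, (Real.exp (-t) - 1) / t)
      = -Real.eulerMascheroniConstant := by
  have hsplit : ∫ t in Set.Ioi (0:ℝ), Real.log t * Real.exp (-t)
      = (∫ t in Set.Ioc (0:ℝ) 1, Real.log t * Real.exp (-t))
        + ∫ t in Set.Ioi (1:ℝ), Real.log t * Real.exp (-t) := by
    rw [← setIntegral_union (Set.Ioc_disjoint_Ioi le_rfl) measurableSet_Ioi
      intOn_log_exp_Ioc intOn_log_exp_Ioi, Set.Ioc_union_Ioi_eq_Ioi zero_le_one]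
  rw [integral_log_exp_eq_neg_gamma, ibp_Ioc, ibp_Ioi] at hsplit
  linarith [hsplit]

private lemma E1_eq {z : ℝ} (hz : 0 < z) (hz1 : z ≤ 1) :
    E1 z = -Real.eulerMascheroniConstant - Real.log z
      - ∫ t in (0:ℝ)..z, (Real.exp (-t) - 1) / t := by
  have hsplit := E1_split hz hz1
  have hzne : ∀ t ∈ Set.uIcc z 1, t ≠ 0 := by
    intro t ht
    rw [Set.uIcc_of_le hz1] at ht
    exact (lt_of_lt_of_le hz ht.1).ne'
  have hcongr : (∫ t in z..1, Real.exp (-t) / t)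
      = (∫ t in z..1, (Real.exp (-t) - 1) / t) + ∫ t in z..1, 1 / t := by
    rw [← intervalIntegral.integral_add]
    · refine intervalIntegral.integral_congr (fun t ht => ?_)
      have := hzne t ht
      field_simp
      ring
    · refine ContinuousOn.intervalIntegrable ?_
      exact ContinuousOn.div
        (((Real.continuous_exp.comp continuous_neg).continuousOn).sub continuousOn_const)
        continuousOn_id (fun t ht => hzne t ht)
    · exact ContinuousOn.intervalIntegrable
        (ContinuousOn.div continuousOn_const continuousOn_id (fun t ht => hzne t ht))
  have hlog : (∫ t in z..1, 1 / t) = -Real.log z := by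
    rw [integral_one_div (by
      rw [Set.uIcc_of_le hz1]
      intro h
      exact absurd h.1 (not_le.mpr hz))]
    rw [one_div, Real.log_inv]
  have hadj : (∫ t in (0:ℝ)..z, (Real.exp (-t) - 1) / t)
      + (∫ t in z..1, (Real.exp (-t) - 1) / t)
      = ∫ t in (0:ℝ)..1, (Real.exp (-t) - 1) / t :=
    intervalIntegral.integral_add_adjacent_intervals
      (g_intervalIntegrable le_rfl hz.le) (g_intervalIntegrable hz.le hz1)
  have hkey := key_gamma
  rw [hsplit, hcongr, hlog]
  linarith [hadj, hkey]

/-- Equation (40) of Lemma 2: as `ε → 0⁺`,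
`ξ1(x, ε) = −(1/x)(γ' + log(ε/x)) + O(ε log ε)`. -/
theorem stmt_10 (x : ℝ) (hx : 0 < x) :
    (fun ε : ℝ => ξ1 x ε + (1 / x) * (Real.eulerMascheroniConstant + Real.log (ε / x)))
      =O[𝓝[>] (0 : ℝ)] (fun ε : ℝ => ε * Real.log ε) := by
  rw [isBigO_iff]
  refine ⟨(Real.exp 1 / (x * x)) *
    (|Real.eulerMascheroniConstant| + |Real.log x| + 2), ?_⟩
  have hmem : Set.Ioo (0:ℝ) (min x (Real.exp (-1))) ∈ 𝓝[>] (0:ℝ) :=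
    Ioo_mem_nhdsGT_of_mem ⟨le_refl 0, lt_min hx (Real.exp_pos _)⟩
  filter_upwards [hmem] with ε hε
  obtain ⟨hε0, hεlt⟩ := hε
  have hεx : ε < x := lt_of_lt_of_le hεlt (min_le_left _ _)
  have hεe : ε < Real.exp (-1) := lt_of_lt_of_le hεlt (min_le_right _ _)
  set z := ε / x with hzdef
  have hz0 : 0 < z := div_pos hε0 hx
  have hz1 : z ≤ 1 := le_of_lt ((div_lt_one hx).mpr hεx)
  set J := ∫ t in (0:ℝ)..z, (Real.exp (-t) - 1) / t with hJ
  have hJle : |J| ≤ z := by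
    have := intervalIntegral.norm_integral_le_of_norm_le_const
      (C := 1) (f := fun t => (Real.exp (-t) - 1) / t) (a := (0:ℝ)) (b := z) ?_
    · rw [Real.norm_eq_abs] at this
      calc |J| ≤ 1 * |z - 0| := this
        _ = z := by rw [sub_zero, abs_of_pos hz0, one_mul]
    · intro t ht
      rw [Set.uIoc_of_le hz0.le] at ht
      rw [Real.norm_eq_abs]
      exact abs_g_le ht.1.le
  have hrw : ξ1 x ε + (1 / x) * (Real.eulerMascheroniConstant + Real.log z)
      = (1 / x) * ((1 - Real.exp z) * (Real.eulerMascheroniConstant + Real.log z)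
        - Real.exp z * J) := by
    rw [ξ1, ← hzdef, E1_eq hz0 hz1, ← hJ]
    field_simp
    ring
  rw [hrw]
  -- bounds
  have hlogz : Real.log z = Real.log ε - Real.log x := Real.log_div hε0.ne' hx.ne'
  have hez : Real.exp z ≤ Real.exp 1 := Real.exp_le_exp.mpr hz1
  have h1z : |1 - Real.exp z| ≤ Real.exp 1 * z := by
    have h1 : 1 - z ≤ (Real.exp z)⁻¹ := by
      have := Real.add_one_le_exp (-z)
      rw [Real.exp_neg] at this
      linarith
    have h2 : Real.exp z * (1 - z) ≤ 1 := by
      have := mul_le_mul_of_nonneg_left h1 (Real.exp_pos z).le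
      rwa [mul_inv_cancel₀ (Real.exp_pos z).ne'] at this
    have h3 : Real.exp z - 1 ≤ z * Real.exp z := by nlinarith
    have h4 : (1:ℝ) ≤ Real.exp z := Real.one_le_exp hz0.le
    rw [abs_sub_comm, abs_of_nonneg (by linarith : (0:ℝ) ≤ Real.exp z - 1)]
    calc Real.exp z - 1 ≤ z * Real.exp z := h3
      _ ≤ z * Real.exp 1 := mul_le_mul_of_nonneg_left hez hz0.le
      _ = Real.exp 1 * z := mul_comm _ _
  have hlogε1 : 1 ≤ |Real.log ε| := by
    have hlt : Real.log ε < -1 := by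
      have := Real.log_lt_log hε0 hεe
      rwa [Real.log_exp] at this
    rw [abs_of_nonpos (by linarith)]
    linarith
  set A := |Real.eulerMascheroniConstant| + |Real.log x| with hA
  have hA0 : 0 ≤ A := by positivity
  have hglc : |Real.eulerMascheroniConstant + Real.log z| ≤ A + |Real.log ε| := by
    rw [hlogz]
    have h4 : |Real.log ε - Real.log x| ≤ |Real.log ε| + |Real.log x| := by
      rw [sub_eq_add_neg]
      exact (abs_add_le _ _).trans_eq (by rw [abs_neg])
    calc |Real.eulerMascheroniConstant + (Real.log ε - Real.log x)|
        ≤ |Real.eulerMascheroniConstant| + |Real.log ε - Real.log x| := abs_add_le _ _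
      _ ≤ A + |Real.log ε| := by rw [hA]; linarith
  have hinner : |(1 - Real.exp z) * (Real.eulerMascheroniConstant + Real.log z)
      - Real.exp z * J| ≤ Real.exp 1 * z * (A + |Real.log ε|) + Real.exp 1 * z := by
    have ha : |(1 - Real.exp z) * (Real.eulerMascheroniConstant + Real.log z)|
        ≤ Real.exp 1 * z * (A + |Real.log ε|) := by
      rw [abs_mul]
      exact mul_le_mul h1z hglc (abs_nonneg _) (by positivity)
    have hb : |Real.exp z * J| ≤ Real.exp 1 * z := by
      rw [abs_mul, abs_of_pos (Real.exp_pos _)]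
      calc Real.exp z * |J| ≤ Real.exp z * z :=
            mul_le_mul_of_nonneg_left hJle (Real.exp_pos _).le
        _ ≤ Real.exp 1 * z := mul_le_mul_of_nonneg_right hez hz0.le
    calc |(1 - Real.exp z) * (Real.eulerMascheroniConstant + Real.log z) - Real.exp z * J|
        ≤ |(1 - Real.exp z) * (Real.eulerMascheroniConstant + Real.log z)|
          + |Real.exp z * J| := by
          rw [sub_eq_add_neg]
          exact (abs_add_le _ _).trans_eq (by rw [abs_neg])
      _ ≤ _ := add_le_add ha hb
  have hεlog : |ε * Real.log ε| = ε * |Real.log ε| := by rw [abs_mul, abs_of_pos hε0]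
  rw [Real.norm_eq_abs, Real.norm_eq_abs, abs_mul, abs_of_pos (one_div_pos.mpr hx), hεlog]
  calc (1/x) * |(1 - Real.exp z) * (Real.eulerMascheroniConstant + Real.log z)
        - Real.exp z * J|
      ≤ (1/x) * (Real.exp 1 * z * (A + |Real.log ε|) + Real.exp 1 * z) :=
        mul_le_mul_of_nonneg_left hinner (by positivity)
    _ = (Real.exp 1 * ε * (1/x) * (1/x)) * (A + |Real.log ε| + 1) := by
        rw [hzdef]; field_simp
    _ ≤ (Real.exp 1 * ε * (1/x) * (1/x)) * ((A + 2) * |Real.log ε|) := by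
        refine mul_le_mul_of_nonneg_left ?_ (by positivity)
        nlinarith [hlogε1, hA0]
    _ = (Real.exp 1 / (x*x)) * (A + 2) * (ε * |Real.log ε|) := by
        field_simp
end

section
/- Let x, y > 0. Then ∫_0^∞ (1/t)·[ (1/x)·e^{−t/x}·(1 − e^{−t/y}) + (1/y)·e^{−t/y}·(1 − e^{−t/x}) ] dt = (1/x)·log(1 + x/y) + (1/y)·log(1 + y/x). -/
open MeasureTheory Set Real Filter

/-- Inner integral: for `s > 0`, `∫ t in (0,∞), exp(-(s t)) dt = 1/s`. -/
lemma inner_exp_integral {s : ℝ} (hs : 0 < s) :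
    ∫ t in Ioi (0 : ℝ), Real.exp (-(s * t)) = 1 / s := by
  have hderiv : ∀ t ∈ Ici (0 : ℝ),
      HasDerivAt (fun u : ℝ => -Real.exp (-(s * u)) / s) (Real.exp (-(s * t))) t := by
    intro t _
    have h1 : HasDerivAt (fun u : ℝ => -(s * u)) (-s) t := by
      simpa using ((hasDerivAt_id t).const_mul (-s))
    have h2 := (h1.exp).neg.div_const s
    rw [show -(Real.exp (-(s * t)) * -s) / s = Real.exp (-(s * t)) by
      rw [mul_neg, neg_neg, mul_div_assoc, div_self hs.ne', mul_one]] at h2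
    exact h2
  have hint : IntegrableOn (fun t => Real.exp (-(s * t))) (Ioi (0 : ℝ)) := by
    simpa [neg_mul] using exp_neg_integrableOn_Ioi 0 hs
  have htend : Tendsto (fun u : ℝ => -Real.exp (-(s * u)) / s) atTop (nhds 0) := by
    have h0 : Tendsto (fun u : ℝ => s * u) atTop atTop := tendsto_id.const_mul_atTop hs
    have h1 : Tendsto (fun u : ℝ => -(s * u)) atTop atBot := tendsto_neg_atBot_iff.mpr h0
    have := (Real.tendsto_exp_atBot.comp h1).neg.div_const s
    simpa using this
  have hmain := integral_Ioi_of_hasDerivAt_of_tendsto' hderiv hint htend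
  rw [hmain]
  simp [neg_div]

/-- Pointwise identity: for `t > 0`, `(e^{-at} - e^{-bt})/t = ∫ s in (a,b], e^{-st}`. -/
lemma slice_eq {a b t : ℝ} (hab : a ≤ b) (ht : 0 < t) :
    ∫ s in Ioc a b, Real.exp (-(s * t)) =
      (Real.exp (-(a * t)) - Real.exp (-(b * t))) / t := by
  rw [← intervalIntegral.integral_of_le hab]
  have hderiv : ∀ s ∈ uIcc a b,
      HasDerivAt (fun u : ℝ => -Real.exp (-(u * t)) / t) (Real.exp (-(s * t))) s := by
    intro s _
    have h1 : HasDerivAt (fun u : ℝ => -(u * t)) (-t) s := by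
      simpa [mul_neg] using (hasDerivAt_id s).mul_const (-t)
    have h2 := (h1.exp).neg.div_const t
    rw [show -(Real.exp (-(s * t)) * -t) / t = Real.exp (-(s * t)) by
      rw [mul_neg, neg_neg, mul_div_assoc, div_self ht.ne', mul_one]] at h2
    exact h2
  have hcont : IntervalIntegrable (fun s => Real.exp (-(s * t))) volume a b :=
    (Real.continuous_exp.comp (by continuity)).intervalIntegrable a b
  rw [intervalIntegral.integral_eq_sub_of_hasDerivAt hderiv hcont]
  ring

/-- Integrability of the double function on the product. -/
lemma prod_integrable {a b : ℝ} (ha : 0 < a) (hab : a ≤ b) :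
    Integrable (fun z : ℝ × ℝ => Real.exp (-(z.2 * z.1)))
      ((volume.restrict (Ioi (0:ℝ))).prod (volume.restrict (Ioc a b))) := by
  have hbound : Integrable (fun z : ℝ × ℝ => Real.exp (-(a * z.1)) * 1)
      ((volume.restrict (Ioi (0:ℝ))).prod (volume.restrict (Ioc a b))) := by
    refine Integrable.mul_prod (f := fun t => Real.exp (-(a * t)))
      (g := fun _ : ℝ => (1 : ℝ)) ?_ ?_
    · simpa [neg_mul] using (exp_neg_integrableOn_Ioi 0 ha).integrable
    · exact integrableOn_const measure_Ioc_lt_top.ne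
  refine hbound.mono ?_ ?_
  · exact (Real.continuous_exp.comp (by continuity)).aestronglyMeasurable
  · rw [Measure.prod_restrict]
    filter_upwards [ae_restrict_mem ((measurableSet_Ioi).prod measurableSet_Ioc)]
      with z hz
    obtain ⟨hz1, hz2⟩ := hz
    simp only [norm_mul, Real.norm_eq_abs, abs_of_pos (Real.exp_pos _), mul_one, abs_one]
    exact Real.exp_le_exp.mpr (by nlinarith [hz1.out.le, hz2.1])

/-- Frullani's integral for exponentials. -/
lemma frullani {a b : ℝ} (ha : 0 < a) (hab : a ≤ b) :
    ∫ t in Ioi (0:ℝ), (Real.exp (-(a * t)) - Real.exp (-(b * t))) / t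
      = Real.log (b / a) := by
  have hb : 0 < b := lt_of_lt_of_le ha hab
  have key : ∫ t in Ioi (0:ℝ), (Real.exp (-(a * t)) - Real.exp (-(b * t))) / t
      = ∫ t in Ioi (0:ℝ), ∫ s in Ioc a b, Real.exp (-(s * t)) := by
    apply setIntegral_congr_fun measurableSet_Ioi
    intro t ht
    exact (slice_eq hab ht).symm
  rw [key]
  have swap := MeasureTheory.integral_integral_swap
    (f := fun t s => Real.exp (-(s * t)))
    (μ := volume.restrict (Ioi (0:ℝ))) (ν := volume.restrict (Ioc a b))
    (prod_integrable ha hab)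
  rw [swap]
  have inner : ∀ s ∈ Ioc a b, (∫ t in Ioi (0:ℝ), Real.exp (-(s * t))) = 1 / s := by
    intro s hs
    exact inner_exp_integral (lt_of_lt_of_le ha hs.1.le)
  rw [setIntegral_congr_fun measurableSet_Ioc inner]
  rw [← intervalIntegral.integral_of_le hab]
  simpa using integral_one_div_of_pos ha hb

/-- Integrability of the Frullani integrand. -/
lemma frullani_integrable {a b : ℝ} (ha : 0 < a) (hab : a ≤ b) :
    IntegrableOn (fun t => (Real.exp (-(a * t)) - Real.exp (-(b * t))) / t)
      (Ioi (0:ℝ)) := by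
  have h := (prod_integrable ha hab).integral_prod_left
  refine h.congr ?_
  filter_upwards [ae_restrict_mem measurableSet_Ioi] with t ht
  exact slice_eq hab ht

/-- The Rayleigh-fading value of `Φ2`: for independent exponential random
variables with means `x` and `y`, `E[1/max(X,Y)]` is given in closed form by
`(1/x)·log(1 + x/y) + (1/y)·log(1 + y/x)`. -/
theorem stmt_13 (x y : ℝ) (hx : 0 < x) (hy : 0 < y) :
    ∫ t in Set.Ioi (0 : ℝ),
        (1 / t) * ((1 / x) * Real.exp (-t / x) * (1 - Real.exp (-t / y)) +
          (1 / y) * Real.exp (-t / y) * (1 - Real.exp (-t / x))) =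
      (1 / x) * Real.log (1 + x / y) + (1 / y) * Real.log (1 + y / x) := by
  set a := 1 / x with ha_def
  set b := 1 / y with hb_def
  have ha : 0 < a := by positivity
  have hb : 0 < b := by positivity
  have hax : a ≤ a + b := by linarith
  have hbx : b ≤ a + b := by linarith
  have hrw : ∀ t ∈ Ioi (0:ℝ),
      (1 / t) * ((1 / x) * Real.exp (-t / x) * (1 - Real.exp (-t / y)) +
          (1 / y) * Real.exp (-t / y) * (1 - Real.exp (-t / x)))
      = a * ((Real.exp (-(a * t)) - Real.exp (-((a+b) * t))) / t)
        + b * ((Real.exp (-(b * t)) - Real.exp (-((a+b) * t))) / t) := by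
    intro t ht
    have h4 : Real.exp (-((a+b)*t)) = Real.exp (-(a*t)) * Real.exp (-(b*t)) := by
      rw [← Real.exp_add]; ring_nf
    have hax' : -t / x = -(a * t) := by rw [ha_def]; ring
    have hby' : -t / y = -(b * t) := by rw [hb_def]; ring
    rw [hax', hby', h4, ← ha_def, ← hb_def]
    ring
  rw [setIntegral_congr_fun measurableSet_Ioi hrw]
  rw [integral_add ((frullani_integrable ha hax).const_mul a)
    ((frullani_integrable hb hbx).const_mul b)]
  rw [integral_const_mul, integral_const_mul, frullani ha hax, frullani hb hbx]
  have h1 : (a + b) / a = 1 + x / y := by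
    rw [ha_def, hb_def]; field_simp
  have h2 : (a + b) / b = 1 + y / x := by
    rw [ha_def, hb_def]; field_simp; ring
  rw [h1, h2]
end

section
/- Let λ ≥ 0 and define I_0(z) = (1/π)·∫_0^π e^{z·cos θ} dθ. Then the function γ ↦ (1/(2γ))·e^{−(γ+λ)/2}·I_0(√(λ·γ)) is not integrable on (0, ∞); equivalently, ∫_0^∞ (1/(2γ))·e^{−(γ+λ)/2}·I_0(√(λ·γ)) dγ = +∞. -/
open MeasureTheory

noncomputable def besselI0 (z : ℝ) : ℝ :=
  (1 / Real.pi) * ∫ θ in (0 : ℝ)..Real.pi, Real.exp (z * Real.cos θ)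

lemma besselI0_ge (z : ℝ) (hz : 0 ≤ z) : Real.exp (-z) ≤ besselI0 z := by
  have hπ : (0:ℝ) < Real.pi := Real.pi_pos
  have h1 : IntervalIntegrable (fun _ : ℝ => Real.exp (-z)) volume 0 Real.pi :=
    intervalIntegrable_const
  have h2 : IntervalIntegrable (fun θ : ℝ => Real.exp (z * Real.cos θ)) volume 0 Real.pi :=
    (Real.continuous_exp.comp (continuous_const.mul Real.continuous_cos)).intervalIntegrable _ _
  have hmono : (∫ θ in (0:ℝ)..Real.pi, Real.exp (-z))
      ≤ ∫ θ in (0:ℝ)..Real.pi, Real.exp (z * Real.cos θ) := by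
    apply intervalIntegral.integral_mono_on hπ.le h1 h2
    intro θ hθ
    apply Real.exp_le_exp.2
    nlinarith [mul_le_mul_of_nonneg_left (Real.neg_one_le_cos θ) hz]
  have : (∫ θ in (0:ℝ)..Real.pi, Real.exp (-z)) = Real.pi * Real.exp (-z) := by
    simp [intervalIntegral.integral_const, smul_eq_mul]
  unfold besselI0
  rw [div_mul_eq_mul_div, one_mul, le_div_iff₀ hπ]
  calc Real.exp (-z) * Real.pi = ∫ θ in (0:ℝ)..Real.pi, Real.exp (-z) := by
        rw [this]; ring
    _ ≤ _ := hmono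

lemma lintegral_inv_top : ∫⁻ γ in Set.Ioc (0:ℝ) 1, ENNReal.ofReal γ⁻¹ = ⊤ := by
  by_contra h
  have hmeas : AEStronglyMeasurable (fun γ : ℝ => γ⁻¹) (volume.restrict (Set.Ioc (0:ℝ) 1)) :=
    measurable_inv.aestronglyMeasurable
  have hint : IntegrableOn (fun γ : ℝ => γ⁻¹) (Set.Ioc (0:ℝ) 1) := by
    refine ⟨hmeas, ?_⟩
    rw [hasFiniteIntegral_iff_norm]
    have : ∫⁻ γ in Set.Ioc (0:ℝ) 1, ENNReal.ofReal ‖γ⁻¹‖ =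
        ∫⁻ γ in Set.Ioc (0:ℝ) 1, ENNReal.ofReal γ⁻¹ := by
      apply setLIntegral_congr_fun measurableSet_Ioc
      intro γ hγ; show ENNReal.ofReal ‖γ⁻¹‖ = ENNReal.ofReal γ⁻¹
      rw [Real.norm_eq_abs, abs_of_nonneg (inv_nonneg.2 hγ.1.le)]
    rw [this]
    exact lt_top_iff_ne_top.2 h
  have hIoo : IntegrableOn (fun γ : ℝ => γ⁻¹) (Set.Ioo (0:ℝ) 1) :=
    hint.mono_set Set.Ioo_subset_Ioc_self
  have : IntegrableOn (fun γ : ℝ => (γ : ℝ) ^ (-1:ℝ)) (Set.Ioo (0:ℝ) 1) := by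
    apply hIoo.congr_fun _ measurableSet_Ioo
    intro γ hγ
    simp [Real.rpow_neg_one]
  rw [intervalIntegral.integrableOn_Ioo_rpow_iff zero_lt_one] at this
  linarith

/-- Corollary 2(ii): the Rician SNR density has infinite expected inverse, i.e.
`γ ↦ (1/(2γ))·e^(−(γ+λ)/2)·I₀(√(λγ))` is not integrable on `(0, ∞)` and its
Lebesgue integral is `+∞`. -/
theorem stmt_15 (lam : ℝ) (hlam : 0 ≤ lam) :
    ¬ IntegrableOn
        (fun γ : ℝ => 1 / (2 * γ) * Real.exp (-(γ + lam) / 2) * besselI0 (Real.sqrt (lam * γ)))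
        (Set.Ioi 0) ∧
    ∫⁻ γ in Set.Ioi (0 : ℝ),
        ENNReal.ofReal
          (1 / (2 * γ) * Real.exp (-(γ + lam) / 2) * besselI0 (Real.sqrt (lam * γ))) = ⊤ := by
  set c : ℝ := (1/2) * Real.exp (-(1 + lam) / 2) * Real.exp (-Real.sqrt lam) with hc
  have hcpos : 0 < c := by positivity
  have key : ∀ γ ∈ Set.Ioc (0:ℝ) 1,
      c * γ⁻¹ ≤ 1 / (2 * γ) * Real.exp (-(γ + lam) / 2) * besselI0 (Real.sqrt (lam * γ)) := by
    intro γ hγ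
    have hγ0 := hγ.1
    have hbes : Real.exp (-Real.sqrt lam) ≤ besselI0 (Real.sqrt (lam * γ)) := by
      refine le_trans ?_ (besselI0_ge _ (Real.sqrt_nonneg _))
      apply Real.exp_le_exp.2
      simp only [neg_le_neg_iff]
      rw [Real.sqrt_mul hlam]
      calc Real.sqrt lam * Real.sqrt γ ≤ Real.sqrt lam * 1 := by
            apply mul_le_mul_of_nonneg_left _ (Real.sqrt_nonneg _)
            rw [show (1:ℝ) = Real.sqrt 1 by simp]
            exact Real.sqrt_le_sqrt hγ.2
        _ = Real.sqrt lam := by ring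
    have hexp : Real.exp (-(1 + lam) / 2) ≤ Real.exp (-(γ + lam) / 2) := by
      apply Real.exp_le_exp.2; linarith [hγ.2]
    have h1 : 1 / (2 * γ) = (1/2) * γ⁻¹ := by field_simp
    rw [h1, hc]
    have hinv : (0:ℝ) ≤ γ⁻¹ := by positivity
    have e1 : (0:ℝ) < Real.exp (-(γ + lam) / 2) := Real.exp_pos _
    nlinarith [Real.exp_pos (-(1 + lam) / 2), Real.exp_pos (-Real.sqrt lam),
      mul_le_mul hexp hbes (Real.exp_pos _).le e1.le,
      mul_le_mul_of_nonneg_right (mul_le_mul hexp hbes (Real.exp_pos _).le e1.le) hinv]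
  have hlin : ∫⁻ γ in Set.Ioi (0 : ℝ),
      ENNReal.ofReal
        (1 / (2 * γ) * Real.exp (-(γ + lam) / 2) * besselI0 (Real.sqrt (lam * γ))) = ⊤ := by
    rw [eq_top_iff]
    calc (⊤ : ENNReal) = ∫⁻ γ in Set.Ioc (0:ℝ) 1, ENNReal.ofReal c * ENNReal.ofReal γ⁻¹ := by
          rw [lintegral_const_mul' _ _ ENNReal.ofReal_ne_top, lintegral_inv_top,
            ENNReal.mul_top (by simpa using hcpos.not_ge ∘ ENNReal.ofReal_eq_zero.mp)]
      _ ≤ ∫⁻ γ in Set.Ioc (0:ℝ) 1,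
            ENNReal.ofReal
              (1 / (2 * γ) * Real.exp (-(γ + lam) / 2) * besselI0 (Real.sqrt (lam * γ))) := by
          apply setLIntegral_mono' measurableSet_Ioc
          intro γ hγ
          rw [← ENNReal.ofReal_mul hcpos.le]
          exact ENNReal.ofReal_le_ofReal (key γ hγ)
      _ ≤ _ := lintegral_mono_set (fun γ hγ => hγ.1)
  refine ⟨?_, hlin⟩
  intro hint
  have := hint.2
  rw [hasFiniteIntegral_iff_norm] at this
  have hle : ∫⁻ γ in Set.Ioi (0 : ℝ),
      ENNReal.ofReal
        (1 / (2 * γ) * Real.exp (-(γ + lam) / 2) * besselI0 (Real.sqrt (lam * γ)))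
      ≤ ∫⁻ γ in Set.Ioi (0 : ℝ),
        ENNReal.ofReal ‖1 / (2 * γ) * Real.exp (-(γ + lam) / 2) * besselI0 (Real.sqrt (lam * γ))‖ := by
    apply lintegral_mono
    intro γ
    exact ENNReal.ofReal_le_ofReal (le_abs_self _)
  rw [hlin] at hle
  exact (lt_irrefl ⊤ (lt_of_le_of_lt hle this))
end
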